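/- arXiv:1208.5413 — 7 statements merged into one kernel-verified Lean document; each statement's English description precedes it below -/
import Mathlib

section
/- Let F ⊆ {F_q → F_q} be a proper linear affine-invariant family of univariate functions (F ≠ all functions), let L ⊆ {F_q^m → F_q} be its m-dimensional lift (all functions whose restriction to every line, suitably parameterized, lies in F), and let N ⊆ F_q^m be a Nikodym set. Then |N| ≥ dim_{F_q}(L). -/
theorem stmt_5 (F : Type) [Field F] [Fintype F] (m : ℕ)
    (Fam : Submodule F (F → F))
    (hinv : ∀ f ∈ Fam, ∀ a b : F, a ≠ 0 → (fun x => f (a * x + b)) ∈ Fam)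
    (hproper : Fam ≠ ⊤)
    (L : Submodule F ((Fin m → F) → F))
    (hL : ∀ g : (Fin m → F) → F,
      g ∈ L ↔ ∀ x y : Fin m → F, y ≠ 0 → (fun t => g (x + t • y)) ∈ Fam)
    (N : Set (Fin m → F))
    (hN : ∀ x : Fin m → F, ∃ y : Fin m → F, y ≠ 0 ∧ ∀ t : F, t ≠ 0 → x + t • y ∈ N) :
    Module.finrank F L ≤ Nat.card N := by
  classical
  -- Key: no nonzero element of Fam is supported on a single point.
  have key : ∀ f ∈ Fam, ∀ c : F, (∀ t : F, t ≠ c → f t = 0) → f c = 0 := by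
    intro f hf c hsupp
    by_contra hfc
    apply hproper
    rw [eq_top_iff]
    intro h _
    have heq : h = ∑ p : F, (h p * (f c)⁻¹) • (fun x => f (1 * x + (c - p))) := by
      funext x
      rw [Finset.sum_apply]
      rw [Finset.sum_eq_single x]
      · simp [hfc]
      · intro p _ hp
        have : f (1 * x + (c - p)) = 0 := by
          apply hsupp
          intro hcontra
          apply hp
          have : p = x := by linear_combination -hcontra
          simp [this]
        simp only [one_mul] at this
        simp [this]
      · simp
    rw [heq]
    exact Submodule.sum_mem _ fun p _ =>
      Submodule.smul_mem _ _ (hinv f hf 1 (c - p) one_ne_zero)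
  -- Any g ∈ L vanishing on N is zero.
  have hzero : ∀ g ∈ L, (∀ n ∈ N, g n = 0) → g = 0 := by
    intro g hg hgN
    funext x
    obtain ⟨y, hy, hty⟩ := hN x
    have hf : (fun t => g (x + t • y)) ∈ Fam := (hL g).mp hg x y hy
    have h0 : g (x + (0 : F) • y) = 0 := by
      apply key _ hf 0
      intro t ht
      exact hgN _ (hty t ht)
    simpa using h0
  -- Restriction map to N is injective on L.
  let π : ((Fin m → F) → F) →ₗ[F] (N → F) :=
    LinearMap.funLeft F F (fun n : N => (n : Fin m → F))
  have hinj : Function.Injective (π.comp L.subtype) := by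
    rw [← LinearMap.ker_eq_bot, LinearMap.ker_eq_bot']
    intro ⟨g, hg⟩ hgker
    have : ∀ n ∈ N, g n = 0 := by
      intro n hn
      exact congrFun hgker ⟨n, hn⟩
    exact Subtype.ext (hzero g hg this)
  have := LinearMap.finrank_le_finrank_of_injective hinj
  simpa [Module.finrank_pi, Nat.card_eq_fintype_card] using this
end

section
/- Let m ≥ 2 and let f : F_2^m → F_2 be a function with 0 < Pr_{x ∈ F_2^m}[f(x) ≠ 0] < δ for some δ > 1/2^{m-1}. Then there exists an (m-1)-dimensional affine subspace H ⊊ F_2^m such that 0 < Pr_{x ∈ H}[f(x) ≠ 0] < δ. -/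
theorem stmt_6 (m : ℕ) (hm : 2 ≤ m) (f : (Fin m → ZMod 2) → ZMod 2) (δ : ℚ)
    (hδ : 1 / 2 ^ (m - 1) < δ)
    (hlo : 0 < (Nat.card {x : Fin m → ZMod 2 | f x ≠ 0} : ℚ) / 2 ^ m)
    (hhi : (Nat.card {x : Fin m → ZMod 2 | f x ≠ 0} : ℚ) / 2 ^ m < δ) :
    ∃ (W : Submodule (ZMod 2) (Fin m → ZMod 2)) (a : Fin m → ZMod 2),
      Module.finrank (ZMod 2) W = m - 1 ∧
      0 < (Nat.card {x : Fin m → ZMod 2 | x - a ∈ W ∧ f x ≠ 0} : ℚ) / 2 ^ (m - 1) ∧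
      (Nat.card {x : Fin m → ZMod 2 | x - a ∈ W ∧ f x ≠ 0} : ℚ) / 2 ^ (m - 1) < δ := by
  classical
  have h2m1 : (0:ℚ) < 2 ^ (m-1) := by positivity
  have hδ' : 1 < δ * 2 ^ (m-1) := by
    rw [div_lt_iff₀ h2m1] at hδ; linarith
  set S := {x : Fin m → ZMod 2 | f x ≠ 0} with hSdef
  have hNS : (Nat.card S : ℚ) < δ * 2 ^ m := by
    rw [div_lt_iff₀ (by positivity : (0:ℚ) < 2 ^ m)] at hhi; exact hhi
  have h2m : (2:ℚ)^m = 2^(m-1) + 2^(m-1) := by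
    have hm1 : m - 1 + 1 = m := by omega
    calc (2:ℚ)^m = 2^(m-1+1) := by rw [hm1]
      _ = 2^(m-1)+2^(m-1) := by rw [pow_succ]; ring
  have hNS' : (Nat.card S : ℚ) < δ * 2^(m-1) + δ * 2^(m-1) := by
    rw [h2m] at hNS; linarith
  have hSne : S.Nonempty := by
    rcases S.eq_empty_or_nonempty with h | h
    · rw [h] at hlo; simp at hlo
    · exact h
  obtain ⟨x0, hx0⟩ := hSne
  suffices key : ∃ (i : Fin m) (a : Fin m → ZMod 2),
      0 < Nat.card {x : Fin m → ZMod 2 | x i = a i ∧ f x ≠ 0} ∧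
      (Nat.card {x : Fin m → ZMod 2 | x i = a i ∧ f x ≠ 0} : ℚ) < δ * 2^(m-1) by
    obtain ⟨i, a, h1, h2⟩ := key
    set π : (Fin m → ZMod 2) →ₗ[ZMod 2] ZMod 2 :=
      LinearMap.proj (R := ZMod 2) (φ := fun _ : Fin m => ZMod 2) i with hπ
    have hset : {x : Fin m → ZMod 2 | x - a ∈ LinearMap.ker π ∧ f x ≠ 0}
        = {x : Fin m → ZMod 2 | x i = a i ∧ f x ≠ 0} := by
      ext z
      simp [hπ, LinearMap.mem_ker, sub_eq_zero]
    refine ⟨LinearMap.ker π, a, ?_, ?_, ?_⟩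
    · have hsurj : Function.Surjective π := fun c => ⟨Function.const _ c, rfl⟩
      have e1 : Module.finrank (ZMod 2) (LinearMap.range π) = 1 := by
        have h : LinearMap.range π = ⊤ := LinearMap.range_eq_top.mpr hsurj
        rw [h, finrank_top, Module.finrank_self]
      have e2 := LinearMap.finrank_range_add_finrank_ker π
      have e3 : Module.finrank (ZMod 2) (Fin m → ZMod 2) = m := by simp
      rw [e1, e3] at e2
      exact Nat.eq_sub_of_add_eq' e2
    · rw [hset]
      apply div_pos _ h2m1
      exact_mod_cast h1
    · rw [hset, div_lt_iff₀ h2m1]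
      exact h2
  by_cases hy : ∃ y ∈ S, y ≠ x0
  · obtain ⟨y, hyS, hyne⟩ := hy
    have hne : x0 - y ≠ 0 := sub_ne_zero.mpr (Ne.symm hyne)
    obtain ⟨i, hi⟩ := Function.ne_iff.mp hne
    have hixy : x0 i ≠ y i := by
      intro h; apply hi; simp [h]
    set A := {x : Fin m → ZMod 2 | x i = x0 i ∧ f x ≠ 0} with hA
    set B := {x : Fin m → ZMod 2 | x i = y i ∧ f x ≠ 0} with hB
    have tri : ∀ a b c : ZMod 2, a ≠ b → c = a ∨ c = b := by decide
    have hAB : A ∪ B = S := by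
      ext z
      constructor
      · rintro (⟨_, hz⟩ | ⟨_, hz⟩) <;> exact hz
      · intro hz
        rcases tri (x0 i) (y i) (z i) hixy with h | h
        · exact Or.inl ⟨h, hz⟩
        · exact Or.inr ⟨h, hz⟩
    have hdisj : Disjoint A B := by
      rw [Set.disjoint_left]
      rintro z ⟨h1, _⟩ ⟨h2, _⟩
      exact hixy (h1 ▸ h2)
    have hcard : Nat.card A + Nat.card B = Nat.card S := by
      rw [Nat.card_coe_set_eq, Nat.card_coe_set_eq, Nat.card_coe_set_eq, ← hAB]
      exact (Set.ncard_union_eq hdisj (Set.toFinite _) (Set.toFinite _)).symm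
    have hcardQ : (Nat.card A : ℚ) + (Nat.card B : ℚ) = (Nat.card S : ℚ) := by
      exact_mod_cast congrArg (Nat.cast : ℕ → ℚ) hcard
    have hApos : 0 < Nat.card A := by
      rw [Nat.card_coe_set_eq, Set.ncard_pos (Set.toFinite _)]
      exact ⟨x0, rfl, hx0⟩
    have hBpos : 0 < Nat.card B := by
      rw [Nat.card_coe_set_eq, Set.ncard_pos (Set.toFinite _)]
      exact ⟨y, rfl, hyS⟩
    by_cases hcase : (Nat.card A : ℚ) < δ * 2^(m-1)
    · exact ⟨i, x0, hApos, hcase⟩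
    · refine ⟨i, y, hBpos, ?_⟩
      push_neg at hcase
      linarith
  · push_neg at hy
    have hSsub : S ⊆ {x0} := fun z hz => hy z hz
    have hS1 : Nat.card S ≤ 1 := by
      rw [Nat.card_coe_set_eq]
      calc S.ncard ≤ ({x0} : Set (Fin m → ZMod 2)).ncard :=
            Set.ncard_le_ncard hSsub (Set.toFinite _)
        _ = 1 := Set.ncard_singleton x0
    obtain ⟨i0⟩ : Nonempty (Fin m) := ⟨⟨0, by omega⟩⟩
    refine ⟨i0, x0, ?_, ?_⟩
    · rw [Nat.card_coe_set_eq, Set.ncard_pos (Set.toFinite _)]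
      exact ⟨x0, rfl, hx0⟩
    · have hsub : {x : Fin m → ZMod 2 | x i0 = x0 i0 ∧ f x ≠ 0} ⊆ S :=
        fun z hz => hz.2
      have hle : Nat.card {x : Fin m → ZMod 2 | x i0 = x0 i0 ∧ f x ≠ 0}
          ≤ Nat.card S := by
        rw [Nat.card_coe_set_eq, Nat.card_coe_set_eq]
        exact Set.ncard_le_ncard hsub (Set.toFinite _)
      have : (Nat.card {x : Fin m → ZMod 2 | x i0 = x0 i0 ∧ f x ≠ 0} : ℚ)
          ≤ 1 := by exact_mod_cast le_trans hle hS1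
      linarith
end

section
/- Let m ≥ 2 and let f : F_3^m → F_3 be a nonzero function with δ(f,0) ≥ 1/3^{m-1}, where δ(f,0) is the fraction of points where f is nonzero. Then there exists an (m-1)-dimensional affine subspace H ⊂ F_3^m such that 0 < δ(f|_H, 0) ≤ δ(f,0). -/
open Finset

private lemma dual_pair {m : ℕ} (u v : Fin m → ZMod 3) (hu : u ≠ 0) (hv : v ≠ 0)
    (hvu : v ≠ u) : ∃ φ : (Fin m → ZMod 3) →ₗ[ZMod 3] ZMod 3, φ u = 1 ∧ φ v = 2 := by
  by_cases hind : LinearIndependent (ZMod 3) ![u, v]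
  · let b := Module.Basis.span hind
    let φ0 := b.constr (ZMod 3) (![1, 2] : Fin 2 → ZMod 3)
    obtain ⟨g, hg⟩ := φ0.exists_extend
    refine ⟨g, ?_, ?_⟩
    · have := congrArg (fun ψ => ψ (b 0)) hg
      simp [LinearMap.comp_apply] at this
      rw [show u = ((b 0 : _) : Fin m → ZMod 3) by simp [b, Module.Basis.span_apply]]
      rw [this]; simp [φ0, Module.Basis.constr_basis]
    · have := congrArg (fun ψ => ψ (b 1)) hg
      simp [LinearMap.comp_apply] at this
      rw [show v = ((b 1 : _) : Fin m → ZMod 3) by simp [b, Module.Basis.span_apply]]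
      rw [this]; simp [φ0, Module.Basis.constr_basis]
  · -- dependent case : v = 2 • u
    rw [LinearIndependent.pair_iff] at hind
    push_neg at hind
    obtain ⟨s, t, hst, hne⟩ := hind
    have hv2u : v = (2 : ZMod 3) • u := by
      by_cases ht : t = 0
      · subst ht
        simp at hst hne
        rcases hst with h | h
        · exact (hne h).elim
        · exact absurd h hu
      · have : v = (-(t⁻¹ * s)) • u := by
          have h1 : t • v = -(s • u) := by
            rw [eq_neg_iff_add_eq_zero, add_comm]; exact hst
          have := congrArg (fun w => t⁻¹ • w) h1
          simpa [smul_smul, inv_mul_cancel₀ ht, neg_smul, mul_assoc] using this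
        have hc : (-(t⁻¹ * s)) = 0 ∨ (-(t⁻¹ * s)) = 1 ∨ (-(t⁻¹ * s)) = 2 := by
          generalize (-(t⁻¹ * s) : ZMod 3) = c; revert c; decide
        rcases hc with h | h | h
        · rw [h, zero_smul] at this; exact absurd this hv
        · rw [h, one_smul] at this; exact absurd this hvu
        · rw [h] at this; exact this
    have h1 := (Module.forall_dual_apply_eq_zero_iff (ZMod 3) u).not.mpr hu
    push_neg at h1
    obtain ⟨φ, hφ⟩ := h1
    refine ⟨(φ u)⁻¹ • φ, by simp [inv_mul_cancel₀ hφ], ?_⟩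
    rw [hv2u, map_smul]
    simp only [smul_eq_mul, LinearMap.smul_apply]
    field_simp

theorem stmt_7 (m : ℕ) (hm : 2 ≤ m) (f : (Fin m → ZMod 3) → ZMod 3)
    (hf : f ≠ 0)
    (hδ : (1 : ℚ) / 3 ^ (m - 1) ≤ (Nat.card {x : Fin m → ZMod 3 | f x ≠ 0} : ℚ) / 3 ^ m) :
    ∃ (W : Submodule (ZMod 3) (Fin m → ZMod 3)) (a : Fin m → ZMod 3),
      Module.finrank (ZMod 3) W = m - 1 ∧
      0 < (Nat.card {x : Fin m → ZMod 3 | x - a ∈ W ∧ f x ≠ 0} : ℚ) / 3 ^ (m - 1) ∧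
      (Nat.card {x : Fin m → ZMod 3 | x - a ∈ W ∧ f x ≠ 0} : ℚ) / 3 ^ (m - 1)
        ≤ (Nat.card {x : Fin m → ZMod 3 | f x ≠ 0} : ℚ) / 3 ^ m := by
  classical
  set T : Finset (Fin m → ZMod 3) := univ.filter (fun x => f x ≠ 0) with hT
  have hcard : Nat.card {x : Fin m → ZMod 3 | f x ≠ 0} = T.card := by
    rw [Nat.card_eq_fintype_card, ← Set.toFinset_card, Set.toFinset_setOf]
  have hp1 : (0:ℚ) < 3 ^ (m-1) := by positivity
  have hpm : (0:ℚ) < 3 ^ m := by positivity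
  have h3m : (3:ℚ) ^ m = 3 * 3 ^ (m-1) := by
    conv_lhs => rw [show m = (m-1)+1 by omega]
    rw [pow_succ']
  -- T.card ≥ 3
  have hN3 : 3 ≤ T.card := by
    rw [hcard, div_le_div_iff₀ hp1 hpm] at hδ
    have : (3:ℚ) * 3 ^ (m-1) ≤ (T.card : ℚ) * 3 ^ (m-1) := by
      calc (3:ℚ) * 3 ^ (m-1) = 1 * 3 ^ m := by rw [h3m]; ring
      _ ≤ (T.card : ℚ) * 3 ^ (m-1) := hδ
    have h3 : (3:ℚ) ≤ (T.card : ℚ) := le_of_mul_le_mul_right this hp1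
    exact_mod_cast h3
  -- three distinct points
  obtain ⟨x, hx⟩ := card_pos.mp (by omega : 0 < T.card)
  have hex : 0 < (T.erase x).card := by rw [card_erase_of_mem hx]; omega
  obtain ⟨y, hy⟩ := card_pos.mp hex
  obtain ⟨hyx, hyT⟩ := mem_erase.mp hy
  have hez : 0 < ((T.erase x).erase y).card := by
    rw [card_erase_of_mem hy, card_erase_of_mem hx]; omega
  obtain ⟨z, hz⟩ := card_pos.mp hez
  obtain ⟨hzy, hz'⟩ := mem_erase.mp hz
  obtain ⟨hzx, hzT⟩ := mem_erase.mp hz'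
  -- functional
  obtain ⟨φ, hφu, hφv⟩ := dual_pair (y - x) (z - x) (sub_ne_zero.mpr hyx)
    (sub_ne_zero.mpr hzx) (fun h => hzy (by
      have := sub_left_injective.eq_iff.mp h; exact this))
  have hφy : φ y = φ x + 1 := by
    rw [map_sub] at hφu; linear_combination hφu
  have hφz : φ z = φ x + 2 := by
    rw [map_sub] at hφv; linear_combination hφv
  -- fibers
  set n : ZMod 3 → ℕ := fun c => (T.filter (fun w => φ w = c)).card with hn
  have hsum : T.card = ∑ c : ZMod 3, n c :=
    card_eq_sum_card_fiberwise (fun w _ => mem_univ (φ w))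
  have hcover : ∀ c : ZMod 3, ∃ w ∈ T, φ w = c := by
    intro c
    have h3 : ∀ a c : ZMod 3, c = a ∨ c = a + 1 ∨ c = a + 2 := by decide
    rcases h3 (φ x) c with h | h | h
    · exact ⟨x, hx, h.symm⟩
    · exact ⟨y, hyT, by rw [hφy, h]⟩
    · exact ⟨z, hzT, by rw [hφz, h]⟩
  have hn1 : ∀ c, 1 ≤ n c := by
    intro c
    obtain ⟨w, hw, hwc⟩ := hcover c
    exact card_pos.mpr ⟨w, mem_filter.mpr ⟨hw, hwc⟩⟩
  obtain ⟨c₀, -, hc₀⟩ := exists_min_image univ n ⟨0, mem_univ 0⟩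
  have h3n : 3 * n c₀ ≤ T.card := by
    have := card_nsmul_le_sum univ n (n c₀) (fun c hc => hc₀ c hc)
    rw [card_univ] at this
    simpa [ZMod.card, hsum] using this
  obtain ⟨a, haT, haφ⟩ := hcover c₀
  -- W = ker φ
  have hrank : Module.finrank (ZMod 3) (LinearMap.ker φ) = m - 1 := by
    have hsurj : LinearMap.range φ = ⊤ := by
      rw [LinearMap.range_eq_top]
      intro c
      exact ⟨c • (y - x), by simp [hφu]⟩
    have := LinearMap.finrank_range_add_finrank_ker φ
    rw [hsurj, finrank_top, Module.finrank_self] at this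
    have hpi : Module.finrank (ZMod 3) (Fin m → ZMod 3) = m := by
      simp [Module.finrank_pi]
    omega
  have hset : Nat.card {w : Fin m → ZMod 3 | w - a ∈ LinearMap.ker φ ∧ f w ≠ 0} = n c₀ := by
    rw [Nat.card_eq_fintype_card, ← Set.toFinset_card, Set.toFinset_setOf]
    congr 1
    ext w
    simp only [mem_filter, mem_univ, true_and, LinearMap.mem_ker, map_sub, sub_eq_zero, haφ, hT]
    tauto
  refine ⟨LinearMap.ker φ, a, hrank, ?_, ?_⟩
  · rw [hset]
    apply div_pos _ hp1
    exact_mod_cast hn1 c₀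
  · rw [hset, hcard, div_le_div_iff₀ hp1 hpm, h3m]
    have h1 : (3 * n c₀ : ℚ) ≤ (T.card : ℚ) := by exact_mod_cast h3n
    nlinarith [hp1]
end

section
/- Let F ⊆ {F_2^t → F_2} be a linear affine-invariant code with minimum distance δ(F) > 1/2^t. Then for every m ≥ t, the lifted code Lift_m(F) = {f : F_2^m → F_2 | f|_V ∈ F for every t-dimensional affine subspace V} has minimum distance at least δ(F). -/
noncomputable section AuxStmt8

abbrev insF8 {m : ℕ} (i : Fin (m+1)) (c : ZMod 2) (y : Fin m → ZMod 2) : Fin (m+1) → ZMod 2 :=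
  Fin.insertNth (α := fun _ => ZMod 2) i c y

lemma insF8_add {m : ℕ} (i : Fin (m+1)) (x y : ZMod 2) (p q : Fin m → ZMod 2) :
    insF8 i (x + y) (p + q) = insF8 i x p + insF8 i y q := by
  funext j
  cases j using i.succAboveCases <;> simp [insF8]

lemma insF8_smul {m : ℕ} (i : Fin (m+1)) (c : ZMod 2) (x : ZMod 2) (p : Fin m → ZMod 2) :
    insF8 i (c • x) (c • p) = c • insF8 i x p := by
  funext j
  cases j using i.succAboveCases <;> simp [insF8]

/-- insert-coordinate affine map -/
def insMap8 (m : ℕ) (i : Fin (m+1)) (c : ZMod 2) :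
    (Fin m → ZMod 2) →ᵃ[ZMod 2] (Fin (m+1) → ZMod 2) where
  toFun y := insF8 i c y
  linear :=
  { toFun := fun y => insF8 i 0 y
    map_add' := fun y z => by simpa using insF8_add i 0 0 y z
    map_smul' := fun r y => by simpa using insF8_smul i r 0 y }
  map_vadd' p v := by
    show insF8 i c (v + p) = insF8 i 0 v + insF8 i c p
    simpa using insF8_add i 0 c v p

lemma insMap8_apply (m : ℕ) (i : Fin (m+1)) (c : ZMod 2) (y : Fin m → ZMod 2) :
    insMap8 m i c y = insF8 i c y := rfl

lemma insMap8_inj (m : ℕ) (i : Fin (m+1)) (c : ZMod 2) :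
    Function.Injective (insMap8 m i c) := by
  intro y z h
  have h' : insF8 i c y = insF8 i c z := h
  have : Fin.removeNth i (insF8 i c y) = Fin.removeNth i (insF8 i c z) := by rw [h']
  simpa [insF8] using this

lemma insMap8_surj (m : ℕ) (i : Fin (m+1)) (x : Fin (m+1) → ZMod 2) :
    insMap8 m i (x i) (Fin.removeNth i x) = x := by
  show insF8 i (x i) (Fin.removeNth i x) = x
  simp [insF8, Fin.insertNth_self_removeNth]

lemma insMap8_apply_i (m : ℕ) (i : Fin (m+1)) (c : ZMod 2) (y : Fin m → ZMod 2) :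
    insMap8 m i c y i = c := by
  show insF8 i c y i = c
  simp [insF8]

/-- extension-by-zero linear map -/
def extMap8 (t m : ℕ) : (Fin t → ZMod 2) →ₗ[ZMod 2] (Fin m → ZMod 2) where
  toFun y := fun j => if hj : (j : ℕ) < t then y ⟨j, hj⟩ else 0
  map_add' y z := by funext j; by_cases hj : (j : ℕ) < t <;> simp [hj]
  map_smul' c y := by funext j; by_cases hj : (j : ℕ) < t <;> simp [hj]

lemma extMap8_inj (t m : ℕ) (h : t ≤ m) : Function.Injective (extMap8 t m) := by
  intro y z hyz
  funext k
  have := congrFun hyz ⟨k, lt_of_lt_of_le k.2 h⟩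
  simpa [extMap8, k.2] using this

def extAff8 (t m : ℕ) (a : Fin m → ZMod 2) :
    (Fin t → ZMod 2) →ᵃ[ZMod 2] (Fin m → ZMod 2) :=
  (extMap8 t m).toAffineMap + AffineMap.const (ZMod 2) (Fin t → ZMod 2) a

lemma extAff8_apply (t m : ℕ) (a : Fin m → ZMod 2) (y : Fin t → ZMod 2) :
    extAff8 t m a y = extMap8 t m y + a := rfl

lemma extAff8_inj (t m : ℕ) (h : t ≤ m) (a : Fin m → ZMod 2) :
    Function.Injective (extAff8 t m a) := by
  intro y z hyz
  apply extMap8_inj t m h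
  have : extMap8 t m y + a = extMap8 t m z + a := hyz
  exact add_right_cancel this

lemma natcard_eq_filter {n : ℕ} (f : (Fin n → ZMod 2) → ZMod 2) :
    (Nat.card {x : Fin n → ZMod 2 | f x ≠ 0}) =
      (Finset.univ.filter (fun x => f x ≠ 0)).card := by
  rw [Nat.card_eq_fintype_card]
  simp [Fintype.card_subtype]

lemma zmod2_two_cases (c : ZMod 2) : c = 0 ∨ c = 1 := by revert c; decide

lemma zmod2_ne_cases (x y c : ZMod 2) (h : x ≠ y) : x = c ∨ y = c := by revert x y c; decide

lemma aux8 (t : ℕ) (Fam : Submodule (ZMod 2) ((Fin t → ZMod 2) → ZMod 2))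
    (δ : ℚ) (hδ : 1 / 2 ^ t < δ)
    (hdist : ∀ f ∈ Fam, f ≠ 0 →
      δ ≤ (Nat.card {x : Fin t → ZMod 2 | f x ≠ 0} : ℚ) / 2 ^ t) :
    ∀ m, t ≤ m → ∀ g : (Fin m → ZMod 2) → ZMod 2,
      (∀ A : (Fin t → ZMod 2) →ᵃ[ZMod 2] (Fin m → ZMod 2),
        Function.Injective A → g ∘ A ∈ Fam) →
      g ≠ 0 → δ ≤ (Nat.card {x : Fin m → ZMod 2 | g x ≠ 0} : ℚ) / 2 ^ m := by
  refine Nat.le_induction ?_ ?_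
  · intro g hg hgne
    have hmem := hg (AffineMap.id (ZMod 2) (Fin t → ZMod 2)) Function.injective_id
    simp only [AffineMap.coe_id, Function.comp_id] at hmem
    exact hdist g hmem hgne
  · intro m htm IH g hg hgne
    -- step 1: find two support points with distinct i-th coordinate
    obtain ⟨a, ha⟩ : ∃ a, g a ≠ 0 := by
      rcases Function.ne_iff.mp hgne with ⟨a, ha⟩
      exact ⟨a, by simpa using ha⟩
    have htm1 : t ≤ m + 1 := le_trans htm (Nat.le_succ m)
    set A := extAff8 t (m+1) a with hA
    have hAinj : Function.Injective A := extAff8_inj t (m+1) htm1 a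
    have hfmem : g ∘ A ∈ Fam := hg A hAinj
    have hA0 : A 0 = a := by
      show extMap8 t (m+1) 0 + a = a
      rw [map_zero, zero_add]
    have hf0 : (g ∘ A) 0 ≠ 0 := by
      show g (A 0) ≠ 0
      rw [hA0]; exact ha
    have hfne : g ∘ A ≠ 0 := fun h => hf0 (by have := congrFun h 0; simpa using this)
    have hfd := hdist _ hfmem hfne
    have hNf : 1 < Nat.card {x : Fin t → ZMod 2 | (g ∘ A) x ≠ 0} := by
      have h2 : (0:ℚ) < 2 ^ t := by positivity
      have h1 : (1:ℚ) < (Nat.card {x : Fin t → ZMod 2 | (g ∘ A) x ≠ 0} : ℚ) := by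
        have := hδ.trans_le hfd
        rw [div_lt_div_iff_of_pos_right h2] at this
        exact this
      exact_mod_cast h1
    rw [Nat.card_coe_set_eq] at hNf
    rw [Set.one_lt_ncard (Set.toFinite _)] at hNf
    obtain ⟨u, hu, v, hv, huv⟩ := hNf
    simp only [Set.mem_setOf_eq, Function.comp_apply] at hu hv
    set p := A u with hp
    set q := A v with hq
    have hpq : p ≠ q := fun h => huv (hAinj h)
    obtain ⟨i, hi⟩ : ∃ i, p i ≠ q i := Function.ne_iff.mp hpq
    -- step 2: split along coordinate i
    have key : ∀ c : ZMod 2, δ ≤ ((Finset.univ.filter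
        (fun y : Fin m → ZMod 2 => g (insMap8 m i c y) ≠ 0)).card : ℚ) / 2 ^ m := by
      intro c
      have hgc : ∀ B : (Fin t → ZMod 2) →ᵃ[ZMod 2] (Fin m → ZMod 2),
          Function.Injective B → (g ∘ insMap8 m i c) ∘ B ∈ Fam := by
        intro B hB
        have := hg ((insMap8 m i c).comp B) ((insMap8_inj m i c).comp hB)
        rw [AffineMap.coe_comp] at this
        simpa [Function.comp_assoc] using this
      have hgcne : g ∘ insMap8 m i c ≠ 0 := by
        rcases zmod2_ne_cases (p i) (q i) c hi with h | h
        · intro h0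
          apply hu
          have := congrFun h0 (Fin.removeNth i p)
          simp only [Function.comp_apply, Pi.zero_apply] at this
          rwa [← h, insMap8_surj] at this
        · intro h0
          apply hv
          have := congrFun h0 (Fin.removeNth i q)
          simp only [Function.comp_apply, Pi.zero_apply] at this
          rwa [← h, insMap8_surj] at this
      have := IH (g ∘ insMap8 m i c) hgc hgcne
      rwa [natcard_eq_filter] at this
    -- step 3: counting
    set S := Finset.univ.filter (fun x : Fin (m+1) → ZMod 2 => g x ≠ 0) with hS
    set S0 := Finset.univ.filter (fun y : Fin m → ZMod 2 => g (insMap8 m i 0 y) ≠ 0) with hS0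
    set S1 := Finset.univ.filter (fun y : Fin m → ZMod 2 => g (insMap8 m i 1 y) ≠ 0) with hS1
    have hsplit : S = S0.image (insMap8 m i 0) ∪ S1.image (insMap8 m i 1) := by
      ext x
      simp only [hS, hS0, hS1, Finset.mem_union, Finset.mem_image, Finset.mem_filter,
        Finset.mem_univ, true_and]
      constructor
      · intro hx
        rcases zmod2_two_cases (x i) with h | h
        · have hx' : insMap8 m i 0 (Fin.removeNth i x) = x := by
            rw [← h]; exact insMap8_surj m i x
          exact Or.inl ⟨Fin.removeNth i x, by rw [hx']; exact hx, hx'⟩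
        · have hx' : insMap8 m i 1 (Fin.removeNth i x) = x := by
            rw [← h]; exact insMap8_surj m i x
          exact Or.inr ⟨Fin.removeNth i x, by rw [hx']; exact hx, hx'⟩
      · rintro (⟨y, hy, rfl⟩ | ⟨y, hy, rfl⟩) <;> exact hy
    have hdisj : Disjoint (S0.image (insMap8 m i 0)) (S1.image (insMap8 m i 1)) := by
      rw [Finset.disjoint_left]
      rintro x hx0 hx1
      obtain ⟨y0, _, rfl⟩ := Finset.mem_image.mp hx0
      obtain ⟨y1, _, he⟩ := Finset.mem_image.mp hx1
      have h0 : insMap8 m i 0 y0 i = 0 := insMap8_apply_i m i 0 y0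
      have h1 : insMap8 m i 0 y0 i = 1 := by rw [← he]; exact insMap8_apply_i m i 1 y1
      rw [h0] at h1
      exact absurd h1 (by decide)
    have hcard : S.card = S0.card + S1.card := by
      rw [hsplit, Finset.card_union_of_disjoint hdisj,
        Finset.card_image_of_injective _ (insMap8_inj m i 0),
        Finset.card_image_of_injective _ (insMap8_inj m i 1)]
    -- step 4: conclude
    rw [natcard_eq_filter, ← hS, hcard]
    have h0 := key 0
    have h1 := key 1
    rw [← hS0] at h0
    rw [← hS1] at h1
    have h2 : (0:ℚ) < 2 ^ m := by positivity
    rw [le_div_iff₀ h2] at h0 h1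
    rw [le_div_iff₀ (by positivity : (0:ℚ) < 2 ^ (m+1))]
    push_cast
    rw [pow_succ]
    nlinarith [h0, h1]

end AuxStmt8

theorem stmt_8 (t m : ℕ) (htm : t ≤ m)
    (Fam : Submodule (ZMod 2) ((Fin t → ZMod 2) → ZMod 2))
    (hinv : ∀ f ∈ Fam, ∀ A : (Fin t → ZMod 2) →ᵃ[ZMod 2] (Fin t → ZMod 2),
      Function.Bijective A → f ∘ A ∈ Fam)
    (δ : ℚ) (hδ : 1 / 2 ^ t < δ)
    (hdist : ∀ f ∈ Fam, f ≠ 0 →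
      δ ≤ (Nat.card {x : Fin t → ZMod 2 | f x ≠ 0} : ℚ) / 2 ^ t)
    (g : (Fin m → ZMod 2) → ZMod 2)
    (hg : ∀ A : (Fin t → ZMod 2) →ᵃ[ZMod 2] (Fin m → ZMod 2),
      Function.Injective A → g ∘ A ∈ Fam)
    (hgne : g ≠ 0) :
    δ ≤ (Nat.card {x : Fin m → ZMod 2 | g x ≠ 0} : ℚ) / 2 ^ m :=
  aux8 t Fam δ hδ hdist m htm g hg hgne
end

section
/- Let Q = 2^ℓ with k = Q, and let D = {0,1,...,Q-2}. For every subset S ⊆ [m] with |S| ≤ Q-2, the 0/1 indicator vector d_S ∈ {0,1}^m (which is 1 on coordinates in S and 0 elsewhere) belongs to Lift_m(D) = {d ∈ {0,...,Q-1}^m : for all e ≤_2 d, (Σ_i e_i) mod* Q ≠ Q-1}. Consequently |Lift_m(D)| ≥ C(m, Q-2). -/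
/-- The `i`-th base-`p` digit of `n`. -/
def digit (p n i : ℕ) : ℕ := (Nat.digits p n).getD i 0

/-- `a ≤_p b`: every base-`p` digit of `a` is at most the corresponding digit of `b`. -/
def pShadow (p a b : ℕ) : Prop := ∀ i, digit p a i ≤ digit p b i

/-- `a mod* Q`: maps `0` to `0` and nonzero `a` to its representative in `{1,…,Q-1}`
modulo `Q - 1`. -/
def modStar (Q a : ℕ) : ℕ := if a = 0 then 0 else (a - 1) % (Q - 1) + 1

lemma digit_getLast {a : ℕ} (ha : a ≠ 0) :
    digit 2 a ((Nat.digits 2 a).length - 1) ≠ 0 := by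
  have hlast := Nat.getLast_digit_ne_zero 2 ha
  have hlen : 0 < (Nat.digits 2 a).length := by
    rw [List.length_pos_iff, ne_eq, Nat.digits_eq_nil_iff_eq_zero]; exact ha
  unfold digit
  rw [List.getD_eq_getElem?_getD, List.getElem?_eq_getElem (by omega),
    ← List.getLast_eq_getElem]
  simpa using hlast

lemma shadow_le_one {a b : ℕ} (hb : b ≤ 1) (h : pShadow 2 a b) : a ≤ b := by
  rcases Nat.eq_zero_or_pos a with rfl | ha
  · exact Nat.zero_le b
  interval_cases b
  · exfalso
    apply digit_getLast (show a ≠ 0 by omega)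
    have := h ((Nat.digits 2 a).length - 1)
    simpa [digit, Nat.digits] using this
  · have hdig : ∀ i, 1 ≤ i → digit 2 a i = 0 := by
      intro i hi
      have h1 : digit 2 1 i = 0 := by
        unfold digit
        rcases Nat.exists_eq_add_of_le hi with ⟨j, rfl⟩
        rw [show Nat.digits 2 1 = [1] from by norm_num,
          List.getD_eq_getElem?_getD, List.getElem?_eq_none (by simp)]
        rfl
      have := h i
      omega
    have hlen : (Nat.digits 2 a).length ≤ 1 := by
      by_contra hl
      push_neg at hl
      exact digit_getLast (show a ≠ 0 by omega) (hdig _ (by omega))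
    have h2 : a < 2 ^ (Nat.digits 2 a).length := Nat.lt_base_pow_length_digits (by norm_num)
    have h3 : (2:ℕ) ^ (Nat.digits 2 a).length ≤ 2 ^ 1 := Nat.pow_le_pow_right (by norm_num) hlen
    omega

lemma key (m Q : ℕ) (hQ2 : 2 ≤ Q) (T : Finset (Fin m)) (hT : T.card ≤ Q - 2)
    (e : Fin m → ℕ) (he : ∀ i, pShadow 2 (e i) (if i ∈ T then 1 else 0)) :
    modStar Q (∑ i, e i) ≠ Q - 1 := by
  have hle : ∀ i, e i ≤ (if i ∈ T then 1 else 0) := by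
    intro i
    exact shadow_le_one (by split <;> omega) (he i)
  have hsum : (∑ i, e i) ≤ T.card := by
    calc (∑ i, e i) ≤ ∑ i, (if i ∈ T then 1 else 0) := Finset.sum_le_sum fun i _ => hle i
    _ = T.card := by simp
  unfold modStar
  split
  · omega
  · have h1 : (∑ i, e i) - 1 < Q - 1 := by omega
    rw [Nat.mod_eq_of_lt h1]
    omega

theorem stmt_11 (ℓ m Q : ℕ) (hℓ : 1 ≤ ℓ) (hQ : Q = 2 ^ ℓ)
    (S : Finset (Fin m)) (hS : S.card ≤ Q - 2) :
    (∀ e : Fin m → ℕ, (∀ i, pShadow 2 (e i) (if i ∈ S then 1 else 0)) →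
      modStar Q (∑ i, e i) ≠ Q - 1) ∧
    Nat.choose m (Q - 2) ≤ Nat.card
      {d : Fin m → ℕ | (∀ i, d i ≤ Q - 1) ∧
        ∀ e : Fin m → ℕ, (∀ i, pShadow 2 (e i) (d i)) →
          modStar Q (∑ i, e i) ≠ Q - 1} := by
  have hQ2 : 2 ≤ Q := by
    rw [hQ]
    calc 2 = 2 ^ 1 := by norm_num
    _ ≤ 2 ^ ℓ := Nat.pow_le_pow_right (by norm_num) hℓ
  constructor
  · exact key m Q hQ2 S hS
  · set A : Set (Fin m → ℕ) := {d : Fin m → ℕ | (∀ i, d i ≤ Q - 1) ∧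
        ∀ e : Fin m → ℕ, (∀ i, pShadow 2 (e i) (d i)) →
          modStar Q (∑ i, e i) ≠ Q - 1} with hA
    have hfin : A.Finite := by
      apply Set.Finite.subset (Set.finite_Icc (0 : Fin m → ℕ) (fun _ => Q - 1))
      intro d hd
      constructor
      · intro i; exact Nat.zero_le _
      · intro i; exact hd.1 i
    have : Finite A := hfin.to_subtype
    have hinj : Function.Injective
        (fun T : {T : Finset (Fin m) // T.card = Q - 2} =>
          (⟨fun i => if i ∈ T.1 then 1 else 0, by
            constructor
            · intro i; dsimp only; split <;> omega
            · exact key m Q hQ2 T.1 (le_of_eq T.2)⟩ : A)) := by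
      intro T U h
      simp only [Subtype.mk.injEq] at h
      ext i
      have := congrFun h i
      by_cases hiT : i ∈ T.1 <;> by_cases hiU : i ∈ U.1 <;> simp [hiT, hiU] at this ⊢
    have hcard := Nat.card_le_card_of_injective _ hinj
    have : Nat.card {T : Finset (Fin m) // T.card = Q - 2} = Nat.choose m (Q - 2) := by
      rw [Nat.card_eq_fintype_card]
      simpa using Fintype.card_finset_len (α := Fin m) (Q - 2)
    rw [← this]
    exact hcard
end

section
/- Let F ⊆ {F_Q^t → F_q} be a proper linear affine-invariant code. Then the m-dimensional lift L = Lift_m(F) is a (Q^t - 1, Q^{-t}/3)-locally correctable code: there is a randomized algorithm that, given oracle access to f that is (Q^{-t}/3)-close to some codeword p ∈ L and given a ∈ F_Q^m, makes at most Q^t - 1 queries and outputs p(a) with probability at least 2/3. The algorithm picks a random t-dimensional affine subspace A through a, reads f on A \ {a}, and uses the unique codeword of F consistent with those values (uniqueness holds since δ(F) ≥ 2Q^{-t}). -/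
open Finset

attribute [local instance] Classical.propDecidable

lemma aux_natcard {α : Type} [Fintype α] (P : α → Prop) {s : Finset α}
    (hs : ∀ x, x ∈ s ↔ P x) : Nat.card {x | P x} = s.card := by
  classical
  have h : {x | P x} = (↑s : Set α) := by ext x; simp [hs x]
  rw [h, Nat.card_coe_set_eq, Set.ncard_coe_finset]




/-- GL acts transitively on nonzero vectors. -/
lemma aux_exists_equiv {K V : Type*} [Field K] [AddCommGroup V] [Module K V]
    {v w : V} (hv : v ≠ 0) (hw : w ≠ 0) : ∃ e : V ≃ₗ[K] V, e v = w := by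
  classical
  have hvli : LinearIndepOn K id ({v} : Set V) := LinearIndepOn.singleton hv
  have hwli : LinearIndepOn K id ({w} : Set V) := LinearIndepOn.singleton hw
  let Bv := Module.Basis.extend hvli
  let Bw := Module.Basis.extend hwli
  have hvmem : v ∈ hvli.extend (Set.subset_univ _) := hvli.subset_extend _ rfl
  have hwmem : w ∈ hwli.extend (Set.subset_univ _) := hwli.subset_extend _ rfl
  let e0 := Bv.indexEquiv Bw
  let σ := e0.trans (Equiv.swap (e0 ⟨v, hvmem⟩) ⟨w, hwmem⟩)
  refine ⟨Bv.equiv Bw σ, ?_⟩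
  have h1 : Bv ⟨v, hvmem⟩ = v := Module.Basis.extend_apply_self hvli _
  have h2 : Bw ⟨w, hwmem⟩ = w := Module.Basis.extend_apply_self hwli _
  calc (Bv.equiv Bw σ) v = (Bv.equiv Bw σ) (Bv ⟨v, hvmem⟩) := by rw [h1]
    _ = Bw (σ ⟨v, hvmem⟩) := by rw [Module.Basis.equiv_apply]
    _ = w := by simp [σ, e0, Equiv.swap_apply_left, h2]

/-- Fibers of `b ↦ ∑ u i • b i` over nonzero points have equal cardinality. -/
lemma aux_fiber_eq {t m : ℕ} {K : Type} [Field K] [Fintype K]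
    (u : Fin t → K) {v w : Fin m → K} (hv : v ≠ 0) (hw : w ≠ 0) :
    (univ.filter fun b : Fin t → (Fin m → K) =>
        LinearIndependent K b ∧ ∑ i, u i • b i = v).card =
    (univ.filter fun b : Fin t → (Fin m → K) =>
        LinearIndependent K b ∧ ∑ i, u i • b i = w).card := by
  obtain ⟨e, he⟩ := aux_exists_equiv (K := K) hv hw
  have key : ∀ (e : (Fin m → K) ≃ₗ[K] (Fin m → K)) (b : Fin t → (Fin m → K)) (z : Fin m → K),
      (LinearIndependent K b ∧ ∑ i, u i • b i = z) →
      (LinearIndependent K (⇑e ∘ b) ∧ ∑ i, u i • (e ∘ b) i = e z) := by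
    intro e b z ⟨h1, h2⟩
    refine ⟨h1.map' e.toLinearMap e.ker, ?_⟩
    rw [← h2, map_sum]
    simp [Function.comp, map_smul]
  apply Finset.card_nbij' (fun b => ⇑e ∘ b) (fun b => ⇑e.symm ∘ b)
  · intro b hb
    simp only [mem_coe, mem_filter, mem_univ, true_and] at hb ⊢
    have := key e b v hb
    rwa [he] at this
  · intro b hb
    simp only [mem_coe, mem_filter, mem_univ, true_and] at hb ⊢
    have := key e.symm b w hb
    rwa [show e.symm w = v from by rw [← he, e.symm_apply_apply]] at this
  · intro b _; funext i; simp
  · intro b _; funext i; simp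



/-- A member of a proper affine-invariant code supported only at 0 is zero. -/
lemma aux_supp_zero {t : ℕ} {K k : Type} [Field K] [Fintype K] [Field k]
    (Fam : Submodule k ((Fin t → K) → k))
    (hinv : ∀ f ∈ Fam, ∀ A : (Fin t → K) →ᵃ[K] (Fin t → K),
      Function.Bijective A → f ∘ A ∈ Fam)
    (hproper : Fam ≠ ⊤)
    (h : (Fin t → K) → k) (hh : h ∈ Fam) (hsupp : ∀ u : Fin t → K, u ≠ 0 → h u = 0) :
    h = 0 := by
  classical
  by_contra hne0
  have h0 : h 0 ≠ 0 := by
    intro hz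
    apply hne0
    funext u
    by_cases hu : u = 0
    · simp [hu, hz]
    · simp [hsupp u hu]
  apply hproper
  rw [Submodule.eq_top_iff']
  intro q
  have hdelta : ∀ w : Fin t → K, (fun u => if u = w then (1 : k) else 0) ∈ Fam := by
    intro w
    set e : (Fin t → K) ≃ᵃ[K] (Fin t → K) := AffineEquiv.constVAdd K (Fin t → K) (-w) with he
    have hmem : h ∘ e.toAffineMap ∈ Fam := hinv h hh e.toAffineMap
      (by simpa using e.bijective)
    have hcomp : h ∘ ⇑e.toAffineMap = (h 0) • fun u => if u = w then (1 : k) else 0 := by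
      funext u
      by_cases hu : u = w
      · simp [he, hu, Function.comp, vadd_eq_add]
      · have : -w +ᵥ u ≠ 0 := by
          simp only [vadd_eq_add]
          intro hc
          apply hu
          have := congrArg (fun x => w + x) hc
          simpa using this
        simp only [he, Function.comp_apply, AffineEquiv.coe_toAffineMap,
          AffineEquiv.constVAdd_apply, vadd_eq_add, hu, if_false, Pi.smul_apply,
          smul_eq_mul, mul_zero]
        exact hsupp _ (by simpa [vadd_eq_add] using this)
    have := Fam.smul_mem (h 0)⁻¹ hmem
    rw [hcomp, smul_smul, inv_mul_cancel₀ h0, one_smul] at this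
    exact this
  have : q = ∑ w : Fin t → K, q w • fun u => if u = w then (1 : k) else 0 := by
    funext u
    simp only [Finset.sum_apply, Pi.smul_apply, smul_eq_mul, mul_ite, mul_one, mul_zero]
    rw [Finset.sum_ite_eq]
    simp
  rw [this]
  exact Submodule.sum_mem _ fun w _ => Fam.smul_mem _ (hdelta w)

/-- Correctness of the local decoder on an error-free subspace. -/
lemma aux_decode {t m : ℕ} {K k : Type} [Field K] [Fintype K] [Field k]
    (Fam : Submodule k ((Fin t → K) → k))
    (hinv : ∀ f ∈ Fam, ∀ A : (Fin t → K) →ᵃ[K] (Fin t → K),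
      Function.Bijective A → f ∘ A ∈ Fam)
    (hproper : Fam ≠ ⊤)
    (f p : (Fin m → K) → k)
    (hp : ∀ A : (Fin t → K) →ᵃ[K] (Fin m → K), Function.Injective A → p ∘ A ∈ Fam)
    (a : Fin m → K) (b : Fin t → (Fin m → K)) (hb : LinearIndependent K b)
    (hgood : ∀ u : Fin t → K, u ≠ 0 →
      f (a + ∑ i, u i • b i) = p (a + ∑ i, u i • b i)) :
    (∃ g ∈ Fam, ∀ u : Fin t → K, u ≠ 0 → g u = f (a + ∑ i, u i • b i)) ∧
    (∀ g ∈ Fam, (∀ u : Fin t → K, u ≠ 0 → g u = f (a + ∑ i, u i • b i)) →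
      g 0 = p a) := by
  classical
  set L : (Fin t → K) →ₗ[K] (Fin m → K) :=
    { toFun := fun u => ∑ i, u i • b i
      map_add' := by
        intro x y
        simp [add_smul, Finset.sum_add_distrib]
      map_smul' := by
        intro c x
        simp [mul_smul, Finset.smul_sum] } with hL
  set A : (Fin t → K) →ᵃ[K] (Fin m → K) :=
    { toFun := fun u => a + ∑ i, u i • b i
      linear := L
      map_vadd' := by
        intro q v
        show a + ∑ i, (v + q) i • b i = (∑ i, v i • b i) +ᵥ (a + ∑ i, q i • b i)
        simp only [Pi.add_apply, add_smul, Finset.sum_add_distrib, vadd_eq_add]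
        abel } with hA
  have hAcoe : ∀ u, A u = a + ∑ i, u i • b i := fun u => rfl
  have hinj : Function.Injective A := by
    intro x y hxy
    rw [hAcoe, hAcoe] at hxy
    have hsum : ∑ i, (x i - y i) • b i = 0 := by
      simp only [sub_smul, Finset.sum_sub_distrib]
      rw [add_left_cancel hxy]
      simp
    funext i
    have := Fintype.linearIndependent_iff.mp hb (fun i => x i - y i) hsum i
    exact sub_eq_zero.mp this
  have hgmem : p ∘ ⇑A ∈ Fam := hp A hinj
  have hA0 : A 0 = a := by
    rw [hAcoe]; simp
  constructor
  · exact ⟨p ∘ ⇑A, hgmem, fun u hu => by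
      simp only [Function.comp_apply, hAcoe]
      exact (hgood u hu).symm⟩
  · intro g hg hgf
    have hdiff : g - p ∘ ⇑A ∈ Fam := Fam.sub_mem hg hgmem
    have hzero : ∀ u : Fin t → K, u ≠ 0 → (g - p ∘ ⇑A) u = 0 := by
      intro u hu
      simp only [Pi.sub_apply, Function.comp_apply, hAcoe]
      rw [hgf u hu, hgood u hu, sub_self]
    have := aux_supp_zero Fam hinv hproper _ hdiff hzero
    have h0 : g 0 - p (A 0) = 0 := by
      have := congrFun this 0
      simpa using this
    rw [hA0] at h0
    exact sub_eq_zero.mp h0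


theorem stmt_16 (t m : ℕ) (ht : 1 ≤ t) (htm : t ≤ m)
    (K k : Type) [Field K] [Fintype K] [Field k]
    (Fam : Submodule k ((Fin t → K) → k))
    (hinv : ∀ f ∈ Fam, ∀ A : (Fin t → K) →ᵃ[K] (Fin t → K),
      Function.Bijective A → f ∘ A ∈ Fam)
    (hproper : Fam ≠ ⊤)
    (f p : (Fin m → K) → k)
    (hp : ∀ A : (Fin t → K) →ᵃ[K] (Fin m → K), Function.Injective A → p ∘ A ∈ Fam)
    (hclose : (Nat.card {x : Fin m → K | f x ≠ p x} : ℚ) / (Fintype.card K : ℚ) ^ m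
      ≤ 1 / (3 * (Fintype.card K : ℚ) ^ t))
    (a : Fin m → K) :
    (2 : ℚ) / 3 * (Nat.card {b : Fin t → (Fin m → K) | LinearIndependent K b} : ℚ)
      ≤ (Nat.card {b : Fin t → (Fin m → K) | LinearIndependent K b ∧
          (∃ g ∈ Fam, ∀ u : Fin t → K, u ≠ 0 → g u = f (a + ∑ i, u i • b i)) ∧
          (∀ g ∈ Fam, (∀ u : Fin t → K, u ≠ 0 → g u = f (a + ∑ i, u i • b i)) →
            g 0 = p a)} : ℚ) := by
  classical
  set Q := Fintype.card K with hQdef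
  have hQ2 : 2 ≤ Q := Fintype.one_lt_card
  set S : Finset (Fin t → (Fin m → K)) := univ.filter fun b => LinearIndependent K b with hS
  set E : Finset (Fin m → K) := univ.filter fun x => f x ≠ p x with hE
  set Bad : Finset (Fin t → (Fin m → K)) := S.filter fun b => ∃ u : Fin t → K, u ≠ 0 ∧
      f (a + ∑ i, u i • b i) ≠ p (a + ∑ i, u i • b i) with hBadDef
  set G : Finset (Fin t → (Fin m → K)) := univ.filter fun b => LinearIndependent K b ∧
      (∃ g ∈ Fam, ∀ u : Fin t → K, u ≠ 0 → g u = f (a + ∑ i, u i • b i)) ∧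
      (∀ g ∈ Fam, (∀ u : Fin t → K, u ≠ 0 → g u = f (a + ∑ i, u i • b i)) →
        g 0 = p a) with hG
  -- cardinality of the ambient space
  have hcardV : Fintype.card (Fin m → K) = Q ^ m := by
    simp [hQdef]
  have hcardW : Fintype.card (Fin t → K) = Q ^ t := by
    simp [hQdef]
  -- Step A : error-free subspaces are good
  have hstepA : S \ Bad ⊆ G := by
    intro b hb
    rw [Finset.mem_sdiff] at hb
    obtain ⟨hbS, hbnB⟩ := hb
    have hbLI : LinearIndependent K b := (Finset.mem_filter.mp hbS).2
    have hgood : ∀ u : Fin t → K, u ≠ 0 →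
        f (a + ∑ i, u i • b i) = p (a + ∑ i, u i • b i) := by
      intro u hu
      by_contra hne
      exact hbnB (Finset.mem_filter.mpr ⟨hbS, ⟨u, hu, hne⟩⟩)
    have := aux_decode Fam hinv hproper f p hp a b hbLI hgood
    exact Finset.mem_filter.mpr ⟨Finset.mem_univ _, hbLI, this.1, this.2⟩
  -- fibers of b ↦ ∑ u i • b i
  have fiberle : ∀ (u : Fin t → K), u ≠ 0 → ∀ v : Fin m → K,
      (S.filter fun b => ∑ i, u i • b i = v).card * (Q ^ m - 1) ≤ S.card := by
    intro u hu v
    have hfilt : ∀ w : Fin m → K, S.filter (fun b => ∑ i, u i • b i = w) =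
        univ.filter fun b => LinearIndependent K b ∧ ∑ i, u i • b i = w := by
      intro w; rw [hS, Finset.filter_filter]
    by_cases hv : v = 0
    · have : S.filter (fun b => ∑ i, u i • b i = v) = ∅ := by
        rw [Finset.eq_empty_iff_forall_notMem]
        intro b hb
        rw [Finset.mem_filter, hS, Finset.mem_filter] at hb
        obtain ⟨⟨-, hLI⟩, hsum⟩ := hb
        rw [hv] at hsum
        have := Fintype.linearIndependent_iff.mp hLI u hsum
        exact hu (funext this)
      simp [this]
    · have htotal : S.card = ∑ w : Fin m → K,
          (S.filter fun b => ∑ i, u i • b i = w).card :=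
        Finset.card_eq_sum_card_fiberwise (fun b _ => Finset.mem_univ _)
      have hsub : ∑ w ∈ Finset.univ.erase (0 : Fin m → K),
          (S.filter fun b => ∑ i, u i • b i = w).card ≤ S.card := by
        rw [htotal]
        exact Finset.sum_le_sum_of_subset (Finset.erase_subset _ _)
      have hconst : ∀ w ∈ Finset.univ.erase (0 : Fin m → K),
          (S.filter fun b => ∑ i, u i • b i = w).card =
          (S.filter fun b => ∑ i, u i • b i = v).card := by
        intro w hw
        have hw0 : w ≠ 0 := Finset.ne_of_mem_erase hw
        rw [hfilt, hfilt]
        exact aux_fiber_eq u hw0 hv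
      rw [Finset.sum_congr rfl hconst, Finset.sum_const, smul_eq_mul,
        Finset.card_erase_of_mem (Finset.mem_univ _), Finset.card_univ, hcardV] at hsub
      calc (S.filter fun b => ∑ i, u i • b i = v).card * (Q ^ m - 1)
          = (Q ^ m - 1) * (S.filter fun b => ∑ i, u i • b i = v).card := Nat.mul_comm _ _
        _ ≤ S.card := hsub
  -- per-direction union bound
  have hBu : ∀ u : Fin t → K, u ≠ 0 →
      (S.filter fun b => f (a + ∑ i, u i • b i) ≠ p (a + ∑ i, u i • b i)).card * (Q ^ m - 1)
        ≤ E.card * S.card := by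
    intro u hu
    set Bu := S.filter fun b => f (a + ∑ i, u i • b i) ≠ p (a + ∑ i, u i • b i) with hBu'
    have hmap : ∀ b ∈ Bu, (a + ∑ i, u i • b i) ∈ E := by
      intro b hb
      rw [hBu', Finset.mem_filter] at hb
      exact Finset.mem_filter.mpr ⟨Finset.mem_univ _, hb.2⟩
    have h1 : Bu.card = ∑ x ∈ E, (Bu.filter fun b => a + ∑ i, u i • b i = x).card :=
      Finset.card_eq_sum_card_fiberwise hmap
    have h2 : ∀ x ∈ E, (Bu.filter fun b => a + ∑ i, u i • b i = x).card ≤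
        (S.filter fun b => ∑ i, u i • b i = x - a).card := by
      intro x _
      apply Finset.card_le_card
      intro b hb
      rw [Finset.mem_filter] at hb
      obtain ⟨hbBu, hbsum⟩ := hb
      rw [hBu', Finset.mem_filter] at hbBu
      exact Finset.mem_filter.mpr ⟨hbBu.1, by rw [← hbsum]; abel⟩
    calc Bu.card * (Q ^ m - 1)
        = ∑ x ∈ E, (Bu.filter fun b => a + ∑ i, u i • b i = x).card * (Q ^ m - 1) := by
          rw [h1, Finset.sum_mul]
      _ ≤ ∑ x ∈ E, (S.filter fun b => ∑ i, u i • b i = x - a).card * (Q ^ m - 1) := by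
          exact Finset.sum_le_sum fun x hx => Nat.mul_le_mul_right _ (h2 x hx)
      _ ≤ ∑ _x ∈ E, S.card := Finset.sum_le_sum fun x _ => fiberle u hu (x - a)
      _ = E.card * S.card := by rw [Finset.sum_const, smul_eq_mul]
  -- union bound over all nonzero directions
  have hBadcard : Bad.card * (Q ^ m - 1) ≤ (Q ^ t - 1) * (E.card * S.card) := by
    have hsub : Bad ⊆ (Finset.univ.erase (0 : Fin t → K)).biUnion
        (fun u => S.filter fun b => f (a + ∑ i, u i • b i) ≠ p (a + ∑ i, u i • b i)) := by
      intro b hb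
      rw [hBadDef, Finset.mem_filter] at hb
      obtain ⟨hbS, u, hu, hne⟩ := hb
      exact Finset.mem_biUnion.mpr ⟨u, Finset.mem_erase.mpr ⟨hu, Finset.mem_univ _⟩,
        Finset.mem_filter.mpr ⟨hbS, hne⟩⟩
    have h1 : Bad.card ≤ ∑ u ∈ Finset.univ.erase (0 : Fin t → K),
        (S.filter fun b => f (a + ∑ i, u i • b i) ≠ p (a + ∑ i, u i • b i)).card :=
      le_trans (Finset.card_le_card hsub) (Finset.card_biUnion_le)
    calc Bad.card * (Q ^ m - 1)
        ≤ (∑ u ∈ Finset.univ.erase (0 : Fin t → K),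
            (S.filter fun b => f (a + ∑ i, u i • b i) ≠ p (a + ∑ i, u i • b i)).card)
            * (Q ^ m - 1) := Nat.mul_le_mul_right _ h1
      _ = ∑ u ∈ Finset.univ.erase (0 : Fin t → K),
            (S.filter fun b => f (a + ∑ i, u i • b i) ≠ p (a + ∑ i, u i • b i)).card
            * (Q ^ m - 1) := Finset.sum_mul _ _ _
      _ ≤ ∑ _u ∈ Finset.univ.erase (0 : Fin t → K), E.card * S.card :=
          Finset.sum_le_sum fun u hu => hBu u (Finset.ne_of_mem_erase hu)
      _ = (Q ^ t - 1) * (E.card * S.card) := by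
          rw [Finset.sum_const, smul_eq_mul, Finset.card_erase_of_mem (Finset.mem_univ _),
            Finset.card_univ, hcardW]
  -- the closeness hypothesis in ℕ
  have hEQ : E.card * (3 * Q ^ t) ≤ Q ^ m := by
    have hEcard : (Nat.card {x : Fin m → K | f x ≠ p x} : ℚ) = (E.card : ℚ) := by
      rw [aux_natcard (s := E) _ (fun x => by rw [hE, Finset.mem_filter]; simp)]
    rw [hEcard] at hclose
    have hQm : (0 : ℚ) < (Q : ℚ) ^ m := by positivity
    have hQt : (0 : ℚ) < 3 * (Q : ℚ) ^ t := by positivity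
    rw [div_le_div_iff₀ hQm hQt, one_mul] at hclose
    have : ((E.card * (3 * Q ^ t) : ℕ) : ℚ) ≤ ((Q ^ m : ℕ) : ℚ) := by
      push_cast
      calc ((E.card : ℚ)) * (3 * (Q:ℚ) ^ t) = (E.card : ℚ) * (3 * (Q:ℚ)^t) := rfl
        _ ≤ (Q:ℚ)^m := by
            have := hclose
            nlinarith [hclose]
    exact_mod_cast this
  -- conclude 3 * Bad.card ≤ S.card
  have hthree : 3 * Bad.card ≤ S.card := by
    have hQmA : Q ^ t ≤ Q ^ m := Nat.pow_le_pow_right (by omega) htm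
    have hA2 : 2 ≤ Q ^ t := le_trans hQ2 (Nat.le_self_pow (by omega) _)
    by_cases hE0 : E.card = 0
    · have : Bad.card * (Q ^ m - 1) = 0 := by
        apply Nat.eq_zero_of_le_zero
        calc Bad.card * (Q^m - 1) ≤ (Q^t -1) * (E.card * S.card) := hBadcard
          _ = 0 := by rw [hE0]; ring
      have hpos : 0 < Q ^ m - 1 := by
        have : 2 ≤ Q ^ m := le_trans hA2 hQmA
        omega
      have : Bad.card = 0 := by
        rcases Nat.mul_eq_zero.mp this with h | h
        · exact h
        · omega
      omega
    · have hE1 : 1 ≤ E.card := Nat.one_le_iff_ne_zero.mpr hE0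
      -- key: 3 * (Q^t - 1) * E.card ≤ Q^m - 1
      have hkey : 3 * ((Q ^ t - 1) * E.card) ≤ Q ^ m - 1 := by
        have expand : 3 * ((Q^t - 1) * E.card) + 3 * E.card = E.card * (3 * Q^t) := by
          obtain ⟨c, hc⟩ := Nat.exists_eq_succ_of_ne_zero (show Q ^ t ≠ 0 by omega)
          rw [hc, Nat.succ_sub_one, Nat.succ_eq_add_one]
          ring
        omega
      have hmul : 3 * Bad.card * (Q ^ m - 1) ≤ (Q ^ m - 1) * S.card := by
        calc 3 * Bad.card * (Q^m - 1) = 3 * (Bad.card * (Q^m -1)) := by ring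
          _ ≤ 3 * ((Q^t - 1) * (E.card * S.card)) := Nat.mul_le_mul_left _ hBadcard
          _ = (3 * ((Q^t -1) * E.card)) * S.card := by ring
          _ ≤ (Q^m - 1) * S.card := Nat.mul_le_mul_right _ hkey
      have hpos : 0 < Q ^ m - 1 := by
        have : 2 ≤ Q ^ m := le_trans hA2 hQmA
        omega
      have := Nat.le_of_mul_le_mul_right (by
        calc 3 * Bad.card * (Q^m -1) ≤ (Q^m -1) * S.card := hmul
          _ = S.card * (Q^m - 1) := Nat.mul_comm _ _) hpos
      exact this
  -- final assembly
  have hBadS : Bad ⊆ S := Finset.filter_subset _ _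
  have hGge : S.card - Bad.card ≤ G.card := by
    calc S.card - Bad.card = (S \ Bad).card := (Finset.card_sdiff_of_subset hBadS).symm
      _ ≤ G.card := Finset.card_le_card hstepA
  have hfinal : 2 * S.card ≤ 3 * G.card := by omega
  rw [aux_natcard (s := S) _ (fun b => by rw [hS, Finset.mem_filter]; simp),
    aux_natcard (s := G) _ (fun b => by rw [hG, Finset.mem_filter]; simp)]
  rw [div_mul_eq_mul_div, div_le_iff₀ (by norm_num : (0:ℚ) < 3)]
  have : ((2 * S.card : ℕ) : ℚ) ≤ ((3 * G.card : ℕ) : ℚ) := by exact_mod_cast hfinal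
  push_cast at this
  linarith
end

section
/- Let Q = 2^s, c ≤ s, d = (1 - 2^{-c})Q, m ≥ 1, and b = 1 + ⌈log_2 m⌉ with b ≤ c. Let d⃗ = (d_1,...,d_m) ∈ {0,...,Q-1}^m and suppose there exists j ∈ {s-c,...,s-b} such that for every i ∈ [m] and every ℓ ∈ {0,...,b-1}, the binary digit d_i^{(j+ℓ)} equals 0. Then for every e⃗ ≤_2 d⃗ (coordinatewise binary shadow), the value e = (Σ_{i=1}^m e_i) mod* Q satisfies e ≤ d; i.e., the binary digit e^{(j+b-1)} of e is 0. -/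
lemma digit_two (n i : ℕ) : digit 2 n i = n / 2 ^ i % 2 := by
  induction i generalizing n with
  | zero =>
    rcases Nat.eq_zero_or_pos n with h | h
    · simp [digit, h]
    · rw [digit, Nat.digits_def' (by norm_num) h]
      simp
  | succ i ih =>
    rcases Nat.eq_zero_or_pos n with h | h
    · simp [digit, h]
    · rw [digit, Nat.digits_def' (by norm_num) h]
      show (Nat.digits 2 (n / 2)).getD i 0 = _
      rw [← digit, ih, Nat.div_div_eq_div_mul, pow_succ, mul_comm (2 ^ i) 2,
        ← Nat.div_div_eq_div_mul, Nat.div_div_eq_div_mul, mul_comm]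

lemma digit_two_testBit (n i : ℕ) : digit 2 n i = (n.testBit i).toNat := by
  rw [digit_two, Nat.testBit_eq_decide_div_mod_eq]
  rcases Nat.mod_two_eq_zero_or_one (n / 2 ^ i) with h | h <;> simp [h]

lemma lt_pow_of_high_bits {n K : ℕ} (h : ∀ k, K ≤ k → n.testBit k = false) :
    n < 2 ^ K := by
  rcases Nat.eq_zero_or_pos n with h0 | h0
  · rw [h0]; exact pow_pos (by norm_num : (0:ℕ) < 2) K
  · have h1 : 2 ^ n.log2 ≤ n := Nat.log2_self_le h0.ne'
    have h2 : n < 2 ^ (n.log2 + 1) := Nat.lt_log2_self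
    have hk : n.testBit n.log2 = true := by
      rw [Nat.testBit_eq_decide_div_mod_eq]
      have hlt : n / 2 ^ n.log2 < 2 := Nat.div_lt_of_lt_mul (by rw [pow_succ] at h2; exact h2)
      have hge : 1 ≤ n / 2 ^ n.log2 :=
        (Nat.one_le_div_iff (pow_pos (by norm_num : (0:ℕ) < 2) _)).mpr h1
      have : n / 2 ^ n.log2 = 1 := by omega
      simp [this]
    have hKk : n.log2 < K := by
      by_contra hc
      rw [h n.log2 (le_of_not_gt hc)] at hk; exact Bool.false_ne_true hk
    exact lt_of_lt_of_le h2 (Nat.pow_le_pow_right (by norm_num) hKk)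

lemma sum_modEq {ι : Type*} (s : Finset ι) (f g : ι → ℕ) (n : ℕ)
    (h : ∀ i ∈ s, f i ≡ g i [MOD n]) : (∑ i ∈ s, f i) ≡ (∑ i ∈ s, g i) [MOD n] := by
  classical
  induction s using Finset.induction with
  | empty => simp [Nat.ModEq.refl]
  | insert _ _ hx ih =>
    rw [Finset.sum_insert hx, Finset.sum_insert hx]
    exact (h _ (Finset.mem_insert_self _ _)).add
      (ih fun i hi => h i (Finset.mem_insert_of_mem hi))

theorem stmt_19 (s c b m Q : ℕ) (hs : 1 ≤ s) (hm : 1 ≤ m) (hb : 1 ≤ b)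
    (hmb : m ≤ 2 ^ (b - 1)) (hbc : b ≤ c) (hcs : c ≤ s) (hQ : Q = 2 ^ s)
    (d : Fin m → ℕ) (hd : ∀ i, d i ≤ Q - 1)
    (j : ℕ) (hj1 : s - c ≤ j) (hj2 : j ≤ s - b)
    (hzero : ∀ i, ∀ l < b, digit 2 (d i) (j + l) = 0) :
    ∀ e : Fin m → ℕ, (∀ i, pShadow 2 (e i) (d i)) →
      digit 2 (modStar Q (∑ i, e i)) (j + b - 1) = 0 ∧
      modStar Q (∑ i, e i) ≤ Q - 2 ^ (s - c) := by
  intro e he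
  have hbs : b ≤ s := hbc.trans hcs
  have has0 : j + b ≤ s := by omega
  obtain ⟨a, ha⟩ : ∃ x, x = j + b := ⟨_, rfl⟩
  obtain ⟨t, ht⟩ : ∃ x, x = s - a := ⟨_, rfl⟩
  have has : a ≤ s := by omega
  have hst : a + t = s := by omega
  have ha1 : 1 ≤ a := by omega
  have hQpos : 1 ≤ Q := by rw [hQ]; exact Nat.one_le_two_pow
  -- digits of e i vanish where digits of d i vanish
  have hez : ∀ i k, digit 2 (d i) k = 0 → (e i).testBit k = false := by
    intro i k hk
    have h1 := he i k
    rw [hk, Nat.le_zero, digit_two_testBit] at h1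
    exact Bool.toNat_eq_zero.mp h1
  have hdlt : ∀ i, d i < 2 ^ s := by
    intro i
    have h1 := hd i
    rw [hQ] at h1
    have : 1 ≤ 2 ^ s := Nat.one_le_two_pow
    omega
  have heslt : ∀ i, e i < 2 ^ s := by
    intro i
    apply lt_pow_of_high_bits
    intro k hk
    apply hez
    rw [digit_two_testBit, Nat.testBit_lt_two_pow
      (lt_of_lt_of_le (hdlt i) (Nat.pow_le_pow_right (by norm_num) hk))]
    rfl
  have hemod : ∀ i, e i % 2 ^ a < 2 ^ j := by
    intro i
    apply lt_pow_of_high_bits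
    intro k hk
    rw [Nat.testBit_mod_two_pow]
    rcases lt_or_ge k a with hka | hka
    · have hkd : k = j + (k - j) ∧ k - j < b := by omega
      rw [hkd.1, hez i _ (hzero i _ hkd.2), Bool.and_false]
    · simp [Nat.not_lt.mpr hka]
  -- the rotated values
  obtain ⟨e', he'⟩ : ∃ f : Fin m → ℕ,
      ∀ i, f i = e i / 2 ^ a + (e i % 2 ^ a) * 2 ^ t := ⟨_, fun i => rfl⟩
  have he'lt : ∀ i, e' i < 2 ^ (s - b) := by
    intro i
    have h1 : e i / 2 ^ a < 2 ^ t := by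
      apply Nat.div_lt_of_lt_mul
      rw [← pow_add, hst]; exact heslt i
    have h2 : e i % 2 ^ a < 2 ^ j := hemod i
    have hpow : 2 ^ j * 2 ^ t = 2 ^ (s - b) := by rw [← pow_add]; congr 1; omega
    have h3 : (e i % 2 ^ a) * 2 ^ t + 2 ^ t ≤ 2 ^ j * 2 ^ t := by
      calc (e i % 2 ^ a) * 2 ^ t + 2 ^ t = (e i % 2 ^ a + 1) * 2 ^ t := by ring
        _ ≤ 2 ^ j * 2 ^ t := Nat.mul_le_mul_right _ h2
    rw [he']
    omega
  have h2s : 2 ^ s ≡ 1 [MOD Q - 1] := by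
    have h1 : 2 ^ s = (Q - 1) + 1 := by rw [hQ] at hQpos ⊢; omega
    calc 2 ^ s = (Q - 1) + 1 := h1
      _ ≡ 0 + 1 [MOD Q - 1] := Nat.ModEq.add_right 1 (Nat.modEq_zero_iff_dvd.mpr dvd_rfl)
      _ = 1 := by ring
  have hcong : ∀ i, 2 ^ a * e' i ≡ e i [MOD Q - 1] := by
    intro i
    apply Nat.ModEq.add_right_cancel' (e i % 2 ^ a)
    have hdm : 2 ^ a * (e i / 2 ^ a) + e i % 2 ^ a = e i := Nat.div_add_mod (e i) (2 ^ a)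
    have hpow : 2 ^ a * 2 ^ t = 2 ^ s := by rw [← pow_add, hst]
    have key : 2 ^ a * e' i + e i % 2 ^ a = e i + (e i % 2 ^ a) * 2 ^ s := by
      rw [he']
      calc 2 ^ a * (e i / 2 ^ a + e i % 2 ^ a * 2 ^ t) + e i % 2 ^ a
          = (2 ^ a * (e i / 2 ^ a) + e i % 2 ^ a) + e i % 2 ^ a * (2 ^ a * 2 ^ t) := by ring
        _ = e i + e i % 2 ^ a * 2 ^ s := by rw [hdm, hpow]
    rw [key]
    calc e i + e i % 2 ^ a * 2 ^ s ≡ e i + e i % 2 ^ a * 1 [MOD Q - 1] :=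
          Nat.ModEq.add_left _ (Nat.ModEq.mul_left _ h2s)
      _ = e i + e i % 2 ^ a := by ring
  obtain ⟨T, hT⟩ : ∃ x, x = ∑ i, e' i := ⟨_, rfl⟩
  have hTlt : T < 2 ^ (s - 1) := by
    have h1 : T ≤ ∑ _i : Fin m, (2 ^ (s - b) - 1) := by
      rw [hT]
      exact Finset.sum_le_sum fun i _ => by have := he'lt i; omega
    rw [Finset.sum_const, Finset.card_univ, Fintype.card_fin, smul_eq_mul] at h1
    have h2 : m * (2 ^ (s - b) - 1) ≤ 2 ^ (b - 1) * (2 ^ (s - b) - 1) :=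
      Nat.mul_le_mul_right _ hmb
    have hpow : 2 ^ (b - 1) * 2 ^ (s - b) = 2 ^ (s - 1) := by
      rw [← pow_add]; congr 1; omega
    have h4 : (2 ^ (s - b) - 1) + 1 = 2 ^ (s - b) := by
      have : (1:ℕ) ≤ 2 ^ (s - b) := Nat.one_le_two_pow
      omega
    have key : 2 ^ (b - 1) * (2 ^ (s - b) - 1) + 2 ^ (b - 1) = 2 ^ (s - 1) := by
      rw [← Nat.mul_succ, Nat.succ_eq_add_one, h4, hpow]
    have h5 : (1:ℕ) ≤ 2 ^ (b - 1) := Nat.one_le_two_pow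
    omega
  have hEcong : (∑ i, e i) ≡ 2 ^ a * T [MOD Q - 1] := by
    rw [hT, Finset.mul_sum]
    exact (sum_modEq Finset.univ (fun i => 2 ^ a * e' i) e (Q - 1)
      (fun i _ => hcong i)).symm
  -- rotate back
  obtain ⟨u, hu⟩ : ∃ x, x = T % 2 ^ t := ⟨_, rfl⟩
  obtain ⟨v, hv⟩ : ∃ x, x = T / 2 ^ t := ⟨_, rfl⟩
  have hvlt : v < 2 ^ (a - 1) := by
    rw [hv]
    apply Nat.div_lt_of_lt_mul
    have hpow : 2 ^ t * 2 ^ (a - 1) = 2 ^ (s - 1) := by rw [← pow_add]; congr 1; omega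
    rw [hpow]; exact hTlt
  obtain ⟨W, hW⟩ : ∃ x, x = v + u * 2 ^ a := ⟨_, rfl⟩
  have hWcong : 2 ^ a * T ≡ W [MOD Q - 1] := by
    apply Nat.ModEq.add_right_cancel' v
    have hdm : 2 ^ t * v + u = T := by rw [hu, hv]; exact Nat.div_add_mod T (2 ^ t)
    have hpow : 2 ^ a * 2 ^ t = 2 ^ s := by rw [← pow_add, hst]
    have hvs : v ≤ v * 2 ^ s :=
      Nat.le_mul_of_pos_right _ (pow_pos (by norm_num : (0:ℕ) < 2) _)
    have key : 2 ^ a * T + v = (W + v) + (v * 2 ^ s - v) := by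
      have hk : 2 ^ a * T + v = W + v * 2 ^ s := by
        calc 2 ^ a * T + v = 2 ^ a * (2 ^ t * v + u) + v := by rw [hdm]
          _ = (v + u * 2 ^ a) + v * (2 ^ a * 2 ^ t) := by ring
          _ = W + v * 2 ^ s := by rw [← hW, hpow]
      omega
    rw [key]
    have hvv : v * 2 ^ s ≡ v [MOD Q - 1] := by
      calc v * 2 ^ s ≡ v * 1 [MOD Q - 1] := Nat.ModEq.mul_left _ h2s
        _ = v := by ring
    calc (W + v) + (v * 2 ^ s - v) ≡ (W + v) + 0 [MOD Q - 1] :=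
          Nat.ModEq.add_left _
            (Nat.modEq_zero_iff_dvd.mpr ((Nat.modEq_iff_dvd' hvs).mp hvv.symm))
      _ = W + v := by ring
  have hEW : (∑ i, e i) ≡ W [MOD Q - 1] := hEcong.trans hWcong
  have h2a1 : (1:ℕ) ≤ 2 ^ (a - 1) := Nat.one_le_two_pow
  have hpa : 2 ^ a = 2 * 2 ^ (a - 1) := by rw [← pow_succ']; congr 1; omega
  have hWb : W + 2 ^ (a - 1) + 1 ≤ 2 ^ s := by
    have hult : u < 2 ^ t := by
      rw [hu]; exact Nat.mod_lt _ (pow_pos (by norm_num : (0:ℕ) < 2) t)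
    have hpow : 2 ^ t * 2 ^ a = 2 ^ s := by rw [← pow_add]; congr 1; omega
    have h3 : u * 2 ^ a + 2 ^ a ≤ 2 ^ s := by
      calc u * 2 ^ a + 2 ^ a = (u + 1) * 2 ^ a := by ring
        _ ≤ 2 ^ t * 2 ^ a := Nat.mul_le_mul_right _ hult
        _ = 2 ^ s := hpow
    omega
  rcases Nat.eq_zero_or_pos T with hT0 | hT0
  · -- all e i are zero
    have he0 : ∀ i, e i = 0 := by
      intro i
      have h0 : e' i = 0 := by
        rw [hT] at hT0
        exact (Finset.sum_eq_zero_iff).mp hT0 i (Finset.mem_univ i)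
      rw [he'] at h0
      have h2t : (2:ℕ) ^ t ≠ 0 := (pow_pos (by norm_num : (0:ℕ) < 2) t).ne'
      have h1 : e i / 2 ^ a = 0 := (Nat.add_eq_zero.mp h0).1
      have h2 : e i % 2 ^ a = 0 := by
        rcases Nat.mul_eq_zero.mp (Nat.add_eq_zero.mp h0).2 with h | h
        · exact h
        · exact absurd h h2t
      have hdm := Nat.div_add_mod (e i) (2 ^ a)
      rw [h1, h2] at hdm
      simpa using hdm.symm
    have hE0 : (∑ i, e i) = 0 := Finset.sum_eq_zero fun i _ => he0 i
    rw [hE0]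
    exact ⟨by simp [modStar, digit], by simp [modStar]⟩
  · -- T > 0
    have hE0 : (∑ i, e i) ≠ 0 := by
      obtain ⟨i, hi⟩ : ∃ i, e' i ≠ 0 := by
        by_contra hc
        push_neg at hc
        have : T = 0 := by rw [hT]; exact Finset.sum_eq_zero fun i _ => hc i
        omega
      have hei : e i ≠ 0 := by
        intro h0
        apply hi
        rw [he', h0]
        simp
      have h1 : e i ≤ ∑ k, e k :=
        Finset.single_le_sum (fun k _ => Nat.zero_le _) (Finset.mem_univ i)
      intro hs0
      rw [hs0] at h1
      exact hei (Nat.le_zero.mp h1)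
    have hW0 : W ≠ 0 := by
      intro h0
      rw [hW] at h0
      have h2a : 0 < 2 ^ a := pow_pos (by norm_num : (0:ℕ) < 2) a
      have hv0 : v = 0 := by omega
      have hu0 : u = 0 := by
        rcases Nat.eq_zero_or_pos u with h | h
        · exact h
        · exfalso
          have : 1 * 1 ≤ u * 2 ^ a := Nat.mul_le_mul h h2a
          omega
      have hdm : 2 ^ t * v + u = T := by rw [hu, hv]; exact Nat.div_add_mod T (2 ^ t)
      rw [hv0, hu0] at hdm
      omega
    have hWQ : W - 1 < Q - 1 := by rw [hQ]; omega
    have hmodW : modStar Q (∑ i, e i) = W := by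
      rw [modStar, if_neg hE0]
      have hcong1 : (∑ i, e i) - 1 ≡ W - 1 [MOD Q - 1] := by
        apply Nat.ModEq.add_right_cancel' 1
        have h1 : (∑ i, e i) - 1 + 1 = ∑ i, e i := by
          have : 1 ≤ ∑ i, e i := Nat.one_le_iff_ne_zero.mpr hE0
          omega
        have h2 : W - 1 + 1 = W := by omega
        rw [h1, h2]
        exact hEW
      have h3 : ((∑ i, e i) - 1) % (Q - 1) = (W - 1) % (Q - 1) := hcong1
      rw [h3, Nat.mod_eq_of_lt hWQ]
      omega
    rw [hmodW]
    constructor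
    · have hab : j + b - 1 = a - 1 := by omega
      rw [hab, digit_two]
      have hsplit : W = v + u * 2 * 2 ^ (a - 1) := by
        rw [hW, hpa]; ring
      rw [hsplit, Nat.add_mul_div_right _ _ (pow_pos (by norm_num : (0:ℕ) < 2) (a - 1)),
        Nat.div_eq_of_lt hvlt]
      simp [Nat.mul_mod_left]
    · have hsc : 2 ^ (s - c) ≤ 2 ^ (a - 1) :=
        Nat.pow_le_pow_right (by norm_num) (by omega)
      rw [hQ]
      omega
end
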